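/- For a d-dimensional density matrix ρ with purity P(ρ) = Tr(ρ²), the von Neumann entropy satisfies S(ρ) ≤ -λ1 log λ1 - (1-λ1) log((1-λ1)/(d-1)), where λ1 = 1/d + √((d-1)/d · (P(ρ) - 1/d)). -/

import Mathlib

open scoped ComplexOrder

/-- Von Neumann entropy (base 2) of a Hermitian matrix, via its eigenvalues. -/
noncomputable def vnEntropy {n : Type*} [Fintype n] [DecidableEq n]
    {ρ : Matrix n n ℂ} (hρ : ρ.IsHermitian) : ℝ :=
  -∑ i, hρ.eigenvalues i * Real.logb 2 (hρ.eigenvalues i)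

/-- Purity Tr(ρ²) of a matrix. -/
noncomputable def purity {n : Type*} [Fintype n] (ρ : Matrix n n ℂ) : ℝ :=
  ((ρ * ρ).trace).re

open Real

/-- Φ(x) = x log x - x + 1 -/
noncomputable def Phi (x : ℝ) : ℝ := x * Real.log x - x + 1

lemma hasDerivAt_Phi {x : ℝ} (hx : x ≠ 0) : HasDerivAt Phi (Real.log x) x := by
  have h1 := Real.hasDerivAt_mul_log hx
  have h2 := (h1.sub (hasDerivAt_id x)).add_const 1
  have : Real.log x + 1 - 1 = Real.log x := by ring
  rw [this] at h2
  exact h2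

lemma chi_antitone : AntitoneOn (fun x => Phi x - (x - 1)^2 / 2) (Set.Ioi (0:ℝ)) := by
  have hderiv : ∀ x ∈ interior (Set.Ioi (0:ℝ)),
      HasDerivAt (fun x => Phi x - (x - 1)^2 / 2) (Real.log x - (x - 1)) x := by
    intro x hx
    rw [interior_Ioi] at hx
    have h1 : HasDerivAt (fun y : ℝ => (y - 1)^2 / 2) (x - 1) x := by
      have : HasDerivAt (fun y : ℝ => (y - 1)^2 / 2) (2 * (x-1)^1 * 1 / 2) x := by
        exact (((hasDerivAt_id x).sub_const 1).pow 2).div_const 2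
      simpa using this
    exact (hasDerivAt_Phi (ne_of_gt hx)).sub h1
  apply antitoneOn_of_deriv_nonpos (convex_Ioi 0)
  · intro x hx
    exact ((hasDerivAt_Phi (ne_of_gt hx)).sub (by
      have : HasDerivAt (fun y : ℝ => (y - 1)^2 / 2) (2 * (x-1)^1 * 1 / 2) x :=
        (((hasDerivAt_id x).sub_const 1).pow 2).div_const 2
      simpa using this)).continuousAt.continuousWithinAt
  · intro x hx
    exact ((hderiv x hx).differentiableAt).differentiableWithinAt
  · intro x hx
    rw [(hderiv x hx).deriv]
    rw [interior_Ioi] at hx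
    have := Real.log_le_sub_one_of_pos hx
    linarith

lemma phi_lower {x : ℝ} (hx : 0 < x) (hx1 : x ≤ 1) : (x - 1)^2 / 2 ≤ Phi x := by
  have := chi_antitone (Set.mem_Ioi.2 hx) (Set.mem_Ioi.2 one_pos) hx1
  simp only [Phi] at this ⊢
  simp [Real.log_one] at this
  nlinarith [this]

lemma phi_upper {x : ℝ} (hx : 1 ≤ x) : Phi x ≤ (x - 1)^2 / 2 := by
  have := chi_antitone (Set.mem_Ioi.2 one_pos) (Set.mem_Ioi.2 (lt_of_lt_of_le one_pos hx)) hx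
  simp only [Phi] at this ⊢
  simp [Real.log_one] at this
  nlinarith [this]

lemma kappa_nonneg {x : ℝ} (hx : 1 ≤ x) : 0 ≤ (x + 1) * Real.log x - 2 * (x - 1) := by
  have hmono : MonotoneOn (fun x => (x + 1) * Real.log x - 2 * (x - 1)) (Set.Ici (1:ℝ)) := by
    have hderiv : ∀ y ∈ interior (Set.Ici (1:ℝ)),
        HasDerivAt (fun x => (x + 1) * Real.log x - 2 * (x - 1))
          (Real.log y + (y + 1) / y - 2) y := by
      intro y hy
      rw [interior_Ici] at hy
      have hy0 : (0:ℝ) < y := lt_trans one_pos hy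
      have h1 : HasDerivAt (fun x : ℝ => (x + 1) * Real.log x)
          (1 * Real.log y + (y + 1) * y⁻¹) y :=
        ((hasDerivAt_id y).add_const 1).mul (Real.hasDerivAt_log (ne_of_gt hy0))
      have h2 : HasDerivAt (fun x : ℝ => 2 * (x - 1)) 2 y := by
        simpa using ((hasDerivAt_id y).sub_const 1).const_mul 2
      have := h1.sub h2
      have he : 1 * Real.log y + (y + 1) * y⁻¹ - 2 = Real.log y + (y + 1) / y - 2 := by
        field_simp
      rwa [he] at this
    apply monotoneOn_of_deriv_nonneg (convex_Ici 1)
    · intro y hy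
      have hy0 : (0:ℝ) < y := lt_of_lt_of_le one_pos hy
      exact (((hasDerivAt_id y).add_const 1).mul
        (Real.hasDerivAt_log (ne_of_gt hy0))).sub
        (by simpa using ((hasDerivAt_id y).sub_const 1).const_mul (2:ℝ))
        |>.continuousAt.continuousWithinAt
    · intro y hy
      exact ((hderiv y hy).differentiableAt).differentiableWithinAt
    · intro y hy
      rw [(hderiv y hy).deriv]
      rw [interior_Ici] at hy
      have hy0 : (0:ℝ) < y := lt_trans one_pos hy
      have hlog : 1 - y⁻¹ ≤ Real.log y := Real.one_sub_inv_le_log_of_pos hy0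
      have : (y + 1) / y = 1 + y⁻¹ := by field_simp
      rw [this]
      linarith
  have := hmono (Set.mem_Ici.2 le_rfl) (Set.mem_Ici.2 hx) hx
  simpa using this

/-- Φ(x)/(x-1)² is antitone on (1,∞). -/
lemma ratio_anti {x z : ℝ} (hx : 1 < x) (hxz : x ≤ z) :
    Phi z * (x - 1)^2 ≤ Phi x * (z - 1)^2 := by
  have key : AntitoneOn (fun x => Phi x / (x - 1)^2) (Set.Ioi (1:ℝ)) := by
    have hderiv : ∀ y ∈ interior (Set.Ioi (1:ℝ)),
        HasDerivAt (fun x => Phi x / (x - 1)^2)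
          ((Real.log y * (y-1)^2 - Phi y * (2 * (y-1))) / ((y-1)^2)^2) y := by
      intro y hy
      rw [interior_Ioi, Set.mem_Ioi] at hy
      have hy1 : y - 1 ≠ 0 := ne_of_gt (by linarith)
      have h1 : HasDerivAt (fun x : ℝ => (x - 1)^2) (2 * (y - 1)) y := by
        have : HasDerivAt (fun x : ℝ => (x - 1)^2) (2 * (y-1)^1 * 1) y :=
          (((hasDerivAt_id y).sub_const 1).pow 2)
        simpa using this
      exact (hasDerivAt_Phi (by intro h; rw [h] at hy; linarith : y ≠ 0)).div h1 (pow_ne_zero 2 hy1)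
    apply antitoneOn_of_deriv_nonpos (convex_Ioi 1)
    · intro y hy
      exact ((hderiv y (by rwa [interior_Ioi])).differentiableAt).continuousAt.continuousWithinAt
    · intro y hy
      exact ((hderiv y hy).differentiableAt).differentiableWithinAt
    · intro y hy
      rw [(hderiv y hy).deriv]
      rw [interior_Ioi, Set.mem_Ioi] at hy
      have hy1 : (0:ℝ) < y - 1 := by linarith
      apply div_nonpos_of_nonpos_of_nonneg _ (by positivity)
      have hk := kappa_nonneg (le_of_lt hy)
      simp only [Phi]
      nlinarith [hy1]
    done
  have h1 : (1:ℝ) < z := lt_of_lt_of_le hx hxz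
  have := key (Set.mem_Ioi.2 hx) (Set.mem_Ioi.2 h1) hxz
  rw [div_le_div_iff₀ (pow_pos (by linarith) 2) (pow_pos (by linarith) 2)] at this
  linarith

lemma phi_nonneg {z : ℝ} (hz : 1 ≤ z) : 0 ≤ Phi z := by
  have hz0 : (0:ℝ) < z := lt_of_lt_of_le one_pos hz
  have := Real.one_sub_inv_le_log_of_pos hz0
  have h2 : z * (1 - z⁻¹) ≤ z * Real.log z := by
    apply mul_le_mul_of_nonneg_left this (le_of_lt hz0)
  have h3 : z * (1 - z⁻¹) = z - 1 := by field_simp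
  simp only [Phi]
  nlinarith

lemma pointwise_bound {Z r y : ℝ} (hZ : 1 < Z) (hr : r = Phi Z / (Z - 1)^2)
    (hy0 : 0 ≤ y) (hyZ : y ≤ Z) : r * (y - 1)^2 ≤ Phi y := by
  have hZ1 : (0:ℝ) < (Z - 1)^2 := pow_pos (by linarith) 2
  have hr_half : r ≤ 1/2 := by
    rw [hr, div_le_iff₀ hZ1]
    have := phi_upper (le_of_lt hZ)
    linarith
  have hr0 : 0 ≤ r := by
    rw [hr]
    exact div_nonneg (phi_nonneg (le_of_lt hZ)) (le_of_lt hZ1)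
  rcases eq_or_lt_of_le hy0 with h0 | hy0'
  · rw [← h0]
    have : Phi 0 = 1 := by simp [Phi]
    rw [this]
    nlinarith
  · rcases le_or_gt y 1 with hy1 | hy1
    · have h1 := phi_lower hy0' hy1
      nlinarith [sq_nonneg (y - 1)]
    · have h2 := ratio_anti hy1 hyZ
      rw [hr, div_mul_eq_mul_div, div_le_iff₀ hZ1]
      nlinarith

lemma core {d : ℕ} (g : Fin d → ℝ) (q l1 : ℝ)
    (hq : 0 < q) (hl : q < l1)
    (hg0 : ∀ i, 0 ≤ g i) (hgl : ∀ i, g i ≤ l1)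
    (hsum : ∑ i, g i = 1)
    (hq1 : l1 + ((d:ℝ) - 1) * q = 1)
    (hP : ∑ i, (g i)^2 = l1^2 + ((d:ℝ) - 1) * q^2) :
    l1 * Real.log l1 + (1 - l1) * Real.log q ≤ ∑ i, g i * Real.log (g i) := by
  set Z : ℝ := l1 / q with hZdef
  have hZ : 1 < Z := (one_lt_div hq).2 hl
  set r : ℝ := Phi Z / (Z - 1)^2 with hrdef
  -- the term rewriting
  have hterm : ∀ x : ℝ, 0 ≤ x →
      q * Phi (x / q) = x * Real.log x - Real.log q * x - x + q := by
    intro x hx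
    rcases eq_or_lt_of_le hx with h0 | hx'
    · rw [← h0]
      simp [Phi]
    · simp only [Phi]
      rw [Real.log_div (ne_of_gt hx') (ne_of_gt hq)]
      field_simp
  -- per-coordinate inequality
  have hper : ∀ i, (r / q) * (g i - q)^2 ≤ q * Phi (g i / q) := by
    intro i
    have hy0 : 0 ≤ g i / q := div_nonneg (hg0 i) (le_of_lt hq)
    have hyZ : g i / q ≤ Z := by
      rw [hZdef]
      gcongr
      exact hgl i
    have hpb := pointwise_bound hZ hrdef hy0 hyZ
    have hgq : g i - q = q * (g i / q - 1) := by field_simp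
    rw [hgq]
    have : (q * (g i / q - 1))^2 = q^2 * (g i / q - 1)^2 := by ring
    rw [this]
    have hq2 : (r / q) * (q^2 * (g i / q - 1)^2) = q * (r * (g i / q - 1)^2) := by
      field_simp
    rw [hq2]
    exact mul_le_mul_of_nonneg_left hpb (le_of_lt hq)
  -- sum of squares identity
  have hsq : ∑ i, (g i - q)^2 = (l1 - q)^2 := by
    have he : ∀ i, (g i - q)^2 = (g i)^2 - 2*q*(g i) + q^2 := fun i => by ring
    rw [Finset.sum_congr rfl (fun i _ => he i)]
    rw [Finset.sum_add_distrib, Finset.sum_sub_distrib, ← Finset.mul_sum,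
      Finset.sum_const, Finset.card_univ, Fintype.card_fin, nsmul_eq_mul,
      hP, hsum]
    linear_combination (2*q) * hq1
  -- summing
  have hsumineq : (r / q) * (l1 - q)^2 ≤ ∑ i, q * Phi (g i / q) := by
    calc (r / q) * (l1 - q)^2 = ∑ i, (r / q) * (g i - q)^2 := by
          rw [← Finset.mul_sum, hsq]
      _ ≤ ∑ i, q * Phi (g i / q) := Finset.sum_le_sum (fun i _ => hper i)
  -- rewrite both sides
  have hlhs : ∑ i, q * Phi (g i / q) =
      (∑ i, g i * Real.log (g i)) - Real.log q - 1 + (d:ℝ) * q := by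
    rw [Finset.sum_congr rfl (fun i _ => hterm (g i) (hg0 i))]
    rw [Finset.sum_add_distrib, Finset.sum_sub_distrib, Finset.sum_sub_distrib,
      ← Finset.mul_sum, Finset.sum_const, Finset.card_univ, Fintype.card_fin,
      nsmul_eq_mul, hsum]
    ring
  have hrq : (r / q) * (l1 - q)^2 = q * Phi Z := by
    have hZ1 : Z - 1 = (l1 - q)/q := by rw [hZdef]; field_simp
    rw [hrdef, hZ1]
    have hlq : l1 - q ≠ 0 := ne_of_gt (by linarith)
    field_simp
  have hrhs : q * Phi Z = l1 * Real.log l1 - Real.log q * l1 - l1 + q := by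
    rw [hZdef]
    exact hterm l1 (le_of_lt (lt_trans hq hl))
  rw [hlhs, hrq, hrhs] at hsumineq
  have hd1 : ((d:ℝ) - 1) * q = 1 - l1 := by linarith
  nlinarith [hsumineq, hd1]

open Matrix in
lemma trace_eq_sum_eig {n : Type*} [Fintype n] [DecidableEq n] {A : Matrix n n ℂ}
    (hA : A.IsHermitian) : A.trace = ∑ i, (hA.eigenvalues i : ℂ) := by
  conv_lhs => rw [hA.spectral_theorem, Unitary.conjStarAlgAut_apply]
  rw [Matrix.trace_mul_cycle]
  rw [(Matrix.mem_unitaryGroup_iff').mp (hA.eigenvectorUnitary).2]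
  rw [Matrix.one_mul, Matrix.trace_diagonal]
  rfl

open Matrix in
lemma trace_sq_eq_sum_eig {n : Type*} [Fintype n] [DecidableEq n] {A : Matrix n n ℂ}
    (hA : A.IsHermitian) : (A * A).trace = ∑ i, ((hA.eigenvalues i : ℂ))^2 := by
  conv_lhs => rw [hA.spectral_theorem, Unitary.conjStarAlgAut_apply]
  set U : Matrix n n ℂ := (hA.eigenvectorUnitary : Matrix n n ℂ)
  set D : Matrix n n ℂ := Matrix.diagonal (RCLike.ofReal ∘ hA.eigenvalues)
  have hUU : star U * U = 1 := (Matrix.mem_unitaryGroup_iff').mp (hA.eigenvectorUnitary).2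
  have hcan : ∀ X : Matrix n n ℂ, star U * (U * X) = X := fun X => by
    rw [← Matrix.mul_assoc, hUU, Matrix.one_mul]
  have : (U * D * star U) * (U * D * star U) = U * (D * D) * star U := by
    simp only [Matrix.mul_assoc, hcan]
  rw [this, Matrix.trace_mul_cycle, hUU, Matrix.one_mul]
  rw [Matrix.diagonal_mul_diagonal, Matrix.trace_diagonal]
  simp [pow_two]

set_option maxHeartbeats 1000000 in
/-- For a d-dimensional density matrix ρ with purity P = Tr(ρ²), the von
Neumann entropy satisfies S(ρ) ≤ -λ1 log λ1 - (1-λ1) log((1-λ1)/(d-1)) with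
λ1 = 1/d + √((d-1)/d (P - 1/d)). -/
theorem stmt8 (d : ℕ) (ρ : Matrix (Fin d) (Fin d) ℂ) (hρ : ρ.PosSemidef)
    (htr : ρ.trace = 1) :
    let P : ℝ := purity ρ
    let l1 : ℝ := 1/(d:ℝ) + Real.sqrt (((d:ℝ)-1)/(d:ℝ) * (P - 1/(d:ℝ)))
    vnEntropy hρ.1 ≤
      -(l1 * Real.logb 2 l1) - (1 - l1) * Real.logb 2 ((1 - l1)/((d:ℝ)-1)) := by
  intro P l1
  have hP : P = purity ρ := rfl
  have hl1def : l1 = 1/(d:ℝ) + Real.sqrt (((d:ℝ)-1)/(d:ℝ) * (P - 1/(d:ℝ))) := rfl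
  set g : Fin d → ℝ := hρ.1.eigenvalues with hgdef
  have hg0 : ∀ i, 0 ≤ g i := fun i => hρ.eigenvalues_nonneg i
  have hsumC : ∑ i, (g i : ℂ) = 1 := by rw [← trace_eq_sum_eig hρ.1, htr]
  have hsum : ∑ i, g i = 1 := by
    have : ((∑ i, g i : ℝ) : ℂ) = 1 := by push_cast; exact hsumC
    exact_mod_cast this
  have hPsum : P = ∑ i, (g i)^2 := by
    rw [hP]
    unfold purity
    rw [trace_sq_eq_sum_eig hρ.1]
    have : ∑ i, ((g i : ℂ))^2 = ((∑ i, (g i)^2 : ℝ) : ℂ) := by push_cast; rfl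
    rw [this, Complex.ofReal_re]
  clear_value P l1 g
  clear hP
  -- dispatch d = 0
  rcases Nat.eq_zero_or_pos d with hd0 | hd0
  · subst hd0
    simp [Matrix.trace] at htr
  rcases eq_or_lt_of_le (show 1 ≤ d from hd0) with hd1 | hd2
  · -- d = 1
    have hd1' : d = 1 := hd1.symm
    subst hd1'
    have hl1 : l1 = 1 := by
      rw [hl1def]
      norm_num
    have hg1 : g 0 = 1 := by
      have := hsum
      simpa [Fin.sum_univ_one] using this
    have hvn : vnEntropy hρ.1 = 0 := by
      unfold vnEntropy
      rw [← hgdef]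
      simp [Fin.sum_univ_one, hg1]
    rw [hvn, hl1]
    simp
  · -- d ≥ 2
    have hd2' : (2:ℝ) ≤ (d:ℝ) := by exact_mod_cast hd2
    have hdR : (0:ℝ) < (d:ℝ) := by linarith
    have hd1R : (0:ℝ) < (d:ℝ) - 1 := by linarith
    set σ : ℝ := Real.sqrt (((d:ℝ)-1)/(d:ℝ) * (P - 1/(d:ℝ))) with hσdef
    have hl1σ : l1 = 1/(d:ℝ) + σ := hl1def
    have hσ0 : 0 ≤ σ := Real.sqrt_nonneg _
    -- sum of squared deviations
    have hsqsum : ∑ i, (g i - 1/(d:ℝ))^2 = P - 1/(d:ℝ) := by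
      have he : ∀ i : Fin d, (g i - 1/(d:ℝ))^2 =
          (g i)^2 - (2/(d:ℝ))*(g i) + (1/(d:ℝ))^2 := fun i => by ring
      rw [Finset.sum_congr rfl (fun i _ => he i), Finset.sum_add_distrib,
        Finset.sum_sub_distrib, ← Finset.mul_sum, Finset.sum_const,
        Finset.card_univ, Fintype.card_fin, nsmul_eq_mul, hsum, ← hPsum]
      field_simp
      ring
    have ht0 : 0 ≤ P - 1/(d:ℝ) := by
      rw [← hsqsum]; exact Finset.sum_nonneg fun i _ => sq_nonneg _
    have hσsq : σ^2 = ((d:ℝ)-1)/(d:ℝ) * (P - 1/(d:ℝ)) := by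
      rw [hσdef]
      exact Real.sq_sqrt (mul_nonneg (le_of_lt (div_pos hd1R hdR)) ht0)
    clear_value σ
    have hg_le1 : ∀ i, g i ≤ 1 := by
      intro i
      calc g i ≤ ∑ j, g j := Finset.single_le_sum (fun j _ => hg0 j) (Finset.mem_univ i)
        _ = 1 := hsum
    have hP_le1 : P ≤ 1 := by
      rw [hPsum, ← hsum]
      exact Finset.sum_le_sum fun i _ => by nlinarith [hg0 i, hg_le1 i]
    have hσ_le : σ ≤ ((d:ℝ)-1)/(d:ℝ) := by
      have h1 : σ^2 ≤ (((d:ℝ)-1)/(d:ℝ))^2 := by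
        rw [hσsq]
        have h2 : P - 1/(d:ℝ) ≤ ((d:ℝ)-1)/(d:ℝ) := by
          have hdd : ((d:ℝ)-1)/(d:ℝ) = 1 - 1/(d:ℝ) := by field_simp
          rw [hdd]
          linarith [hP_le1]
        nlinarith [div_pos hd1R hdR]
      nlinarith [hσ0, div_pos hd1R hdR]
    have hl1_le1 : l1 ≤ 1 := by
      rw [hl1σ]
      have : 1/(d:ℝ) + ((d:ℝ)-1)/(d:ℝ) = 1 := by field_simp; ring
      linarith [hσ_le]
    -- every eigenvalue is at most l1
    have hgl : ∀ i, g i ≤ l1 := by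
      intro i
      have hcs := sq_sum_le_card_mul_sum_sq
        (s := (Finset.univ : Finset (Fin d)).erase i) (f := fun j => g j - 1/(d:ℝ))
      have hcard : ((Finset.univ : Finset (Fin d)).erase i).card = d - 1 := by
        rw [Finset.card_erase_of_mem (Finset.mem_univ i), Finset.card_univ, Fintype.card_fin]
      have hcardR : (((Finset.univ : Finset (Fin d)).erase i).card : ℝ) = (d:ℝ) - 1 := by
        rw [hcard]
        have : (1:ℕ) ≤ d := hd0
        push_cast [Nat.cast_sub this]
        ring
      have hes : ∑ j ∈ (Finset.univ : Finset (Fin d)).erase i, (g j - 1/(d:ℝ))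
          = -(g i - 1/(d:ℝ)) := by
        have h1 : ∑ j, (g j - 1/(d:ℝ)) = 0 := by
          rw [Finset.sum_sub_distrib, hsum, Finset.sum_const, Finset.card_univ,
            Fintype.card_fin, nsmul_eq_mul]
          field_simp
          ring
        have h2 := Finset.add_sum_erase (Finset.univ : Finset (Fin d))
          (fun j => g j - 1/(d:ℝ)) (Finset.mem_univ i)
        rw [h1] at h2
        linarith
      have hes2 : ∑ j ∈ (Finset.univ : Finset (Fin d)).erase i, (g j - 1/(d:ℝ))^2
          = (P - 1/(d:ℝ)) - (g i - 1/(d:ℝ))^2 := by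
        have h2 := Finset.add_sum_erase (Finset.univ : Finset (Fin d))
          (fun j => (g j - 1/(d:ℝ))^2) (Finset.mem_univ i)
        rw [hsqsum] at h2
        linarith
      rw [hes, hcardR, hes2] at hcs
      have hui : (g i - 1/(d:ℝ))^2 ≤ σ^2 := by
        rw [hσsq]
        have hd' : (0:ℝ) < d := hdR
        rw [div_mul_eq_mul_div, le_div_iff₀ hd']
        nlinarith [hcs]
      have : g i - 1/(d:ℝ) ≤ σ := by nlinarith [hσ0, hui, sq_nonneg (g i - 1/(d:ℝ) - σ), sq_nonneg (g i - 1/(d:ℝ) + σ)]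
      rw [hl1σ]
      linarith
    -- case split on t = 0
    rcases eq_or_lt_of_le ht0 with ht | ht
    · -- t = 0 : uniform
      have hσz : σ = 0 := by
        have h2 : σ^2 = 0 := by rw [hσsq, ← ht, mul_zero]
        exact (pow_eq_zero_iff (by norm_num : (2:ℕ) ≠ 0)).1 h2
      have hguni : ∀ i, g i = 1/(d:ℝ) := by
        intro i
        have h0 : ∑ i, (g i - 1/(d:ℝ))^2 = 0 := by rw [hsqsum, ← ht]
        have := (Finset.sum_eq_zero_iff_of_nonneg
          (fun i _ => sq_nonneg (g i - 1/(d:ℝ)))).1 h0 i (Finset.mem_univ i)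
        have := sq_eq_zero_iff.1 this
        linarith
      have hl1u : l1 = 1/(d:ℝ) := by rw [hl1σ, hσz, add_zero]
      have hqu : (1 - l1)/((d:ℝ)-1) = 1/(d:ℝ) := by
        rw [hl1u]
        field_simp
      have hvn : vnEntropy hρ.1 = -((d:ℝ) * ((1/(d:ℝ)) * Real.logb 2 (1/(d:ℝ)))) := by
        unfold vnEntropy
        rw [← hgdef, Finset.sum_congr rfl (fun i _ => by rw [hguni i]),
          Finset.sum_const, Finset.card_univ, Fintype.card_fin, nsmul_eq_mul]
      rw [hvn, hqu, hl1u]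
      apply le_of_eq
      have hd' : (d:ℝ) ≠ 0 := ne_of_gt hdR
      field_simp
      ring
    · -- t > 0
      have hσpos : 0 < σ := by
        have h1 : 0 < σ^2 := by
          rw [hσsq]
          exact mul_pos (div_pos hd1R hdR) ht
        rcases eq_or_lt_of_le hσ0 with h | h
        · rw [← h] at h1; simp at h1
        · exact h
      set q : ℝ := (1 - l1)/((d:ℝ)-1) with hqdef
      have hq0 : 0 ≤ q := div_nonneg (by linarith) (le_of_lt hd1R)
      have hq1 : l1 + ((d:ℝ)-1) * q = 1 := by
        rw [hqdef]
        field_simp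
        ring
      rcases eq_or_lt_of_le hq0 with hq | hq
      · -- q = 0, l1 = 1, pure state
        have hl11 : l1 = 1 := by
          have : (1 - l1) = 0 := by
            have := hq.symm
            rw [hqdef] at this
            field_simp at this
            linarith
          linarith
        have hPeq1 : P = 1 := by
          have hσv : σ = ((d:ℝ)-1)/(d:ℝ) := by
            rw [hl1σ] at hl11
            field_simp at hl11 ⊢
            linarith
          have := hσsq
          rw [hσv] at this
          have hne : ((d:ℝ)-1)/(d:ℝ) ≠ 0 := by positivity
          field_simp at this
          nlinarith [hdR, hd1R]
        have hbool : ∀ i, g i = 0 ∨ g i = 1 := by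
          intro i
          have h0 : ∑ j, (g j - (g j)^2) = 0 := by
            rw [Finset.sum_sub_distrib, hsum, ← hPsum, hPeq1]
            ring
          have := (Finset.sum_eq_zero_iff_of_nonneg
            (fun j _ => by nlinarith [hg0 j, hg_le1 j])).1 h0 i (Finset.mem_univ i)
          rcases eq_or_lt_of_le (hg0 i) with h | h
          · left; exact h.symm
          · right; nlinarith
        have hvn : vnEntropy hρ.1 = 0 := by
          unfold vnEntropy
          rw [← hgdef]
          rw [Finset.sum_eq_zero, neg_zero]
          intro i _
          rcases hbool i with h | h <;> simp [h]
        rw [hvn, hl11]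
        simp
      · -- main case : q > 0
        have hql1 : q < l1 := by
          have hl1d : 1/(d:ℝ) < l1 := by rw [hl1σ]; linarith
          have h1 : ((d:ℝ)-1) * q < ((d:ℝ)-1) * (1/(d:ℝ)) := by
            have e : ((d:ℝ)-1) * (1/(d:ℝ)) = 1 - 1/(d:ℝ) := by field_simp
            rw [e]; linarith
          have h2 : q < 1/(d:ℝ) := (mul_lt_mul_iff_right₀ hd1R).1 h1
          linarith
        have hPcore : ∑ i, (g i)^2 = l1^2 + ((d:ℝ)-1) * q^2 := by
          rw [← hPsum]
          have hd' : (d:ℝ) ≠ 0 := ne_of_gt hdR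
          have hd1' : (d:ℝ) - 1 ≠ 0 := ne_of_gt hd1R
          have h1'' : (d:ℝ)^2*σ^2 = ((d:ℝ)-1)*((d:ℝ)*P-1) := by
            rw [hσsq]; field_simp
          have hqv : ((d:ℝ)-1)*q = 1 - l1 := by rw [hqdef]; field_simp
          have hC : (d:ℝ)*l1 = 1 + (d:ℝ)*σ := by rw [hl1σ]; field_simp
          apply mul_left_cancel₀ (mul_ne_zero hd' hd1')
          linear_combination (-1 : ℝ) * h1'' + (-((d:ℝ)*(((d:ℝ)-1)*q + (1 - l1)))) * hqv
            + (-((d:ℝ)*l1 - 1) - (d:ℝ)*σ) * hC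
        have hcore := core g q l1 hq hql1 hg0 hgl hsum hq1 hPcore
        -- convert to logb
        unfold vnEntropy
        rw [← hgdef]
        simp only [Real.logb, ← hqdef]
        have hlog2 : 0 < Real.log 2 := Real.log_pos one_lt_two
        have hlhs : ∑ i, g i * (Real.log (g i) / Real.log 2)
            = (∑ i, g i * Real.log (g i)) / Real.log 2 := by
          rw [Finset.sum_div]
          exact Finset.sum_congr rfl fun i _ => by ring
        rw [hlhs]
        have e1 : -(l1 * (Real.log l1 / Real.log 2)) - (1 - l1) * (Real.log q / Real.log 2)
            = (-(l1 * Real.log l1) - (1 - l1) * Real.log q) / Real.log 2 := by ring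
        have e2 : -((∑ i, g i * Real.log (g i)) / Real.log 2)
            = (-(∑ i, g i * Real.log (g i))) / Real.log 2 := by ring
        rw [e1, e2, div_le_div_iff₀ hlog2 hlog2]
        nlinarith [hcore, hlog2]
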